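/- Fix q ∈ ℝ^d with q ≠ 0, η > 0, x ∈ ℝ^d, and y ∈ ℝ, and write p = ⟨q, x⟩. Define s : [0,∞) → ℝ by s(h) = ((p − y)/‖q‖²)(1 − e^{−h η ‖q‖²}). Then s(0) = 0 and s'(h) = η (⟨q, x − s(h) q⟩ − y) for all h ≥ 0; that is, s is the IWA scaling function for the squared loss ℓ̂(r) = (1/2)(r − y)². -/

import Mathlib

open scoped RealInnerProductSpace

/-- The explicit IWA scaling function for the squared loss
`ℓ̂(r) = (1/2)(r - y)²`: `s(h) = ((p - y)/‖q‖²)(1 - e^{-hη‖q‖²})` satisfies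
`s(0) = 0` and `s'(h) = η(⟨q, x - s(h) q⟩ - y)` for all `h ≥ 0`. -/
theorem iwa_scaling_squared_loss
    (d : ℕ) (q : EuclideanSpace ℝ (Fin d)) (hq : q ≠ 0) (η : ℝ) (hη : 0 < η)
    (x : EuclideanSpace ℝ (Fin d)) (y : ℝ) (p : ℝ) (hp : p = ⟪q, x⟫)
    (s : ℝ → ℝ)
    (hs : ∀ h : ℝ, s h = (p - y) / ‖q‖ ^ 2 * (1 - Real.exp (-(h * η * ‖q‖ ^ 2)))) :
    s 0 = 0 ∧ ∀ h : ℝ, 0 ≤ h → HasDerivAt s (η * (⟪q, x - s h • q⟫ - y)) h := by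
  have hq2 : ‖q‖ ^ 2 ≠ 0 := pow_ne_zero 2 (norm_ne_zero_iff.mpr hq)
  constructor
  · rw [hs 0]; simp
  · intro h _
    have key : HasDerivAt (fun t : ℝ => (p - y) / ‖q‖ ^ 2 *
        (1 - Real.exp (-(t * η * ‖q‖ ^ 2)))) ((p - y) * η * Real.exp (-(h * η * ‖q‖ ^ 2))) h := by
      have h1 : HasDerivAt (fun t : ℝ => -(t * η * ‖q‖ ^ 2)) (-(η * ‖q‖ ^ 2)) h := by
        have := ((hasDerivAt_id h).mul_const (η * ‖q‖ ^ 2)).neg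
        simpa [mul_assoc, Pi.neg_def] using this
      have h2 := (h1.exp).const_sub 1
      have h3 := h2.const_mul ((p - y) / ‖q‖ ^ 2)
      refine h3.congr_deriv ?_
      field_simp
    have hinner : ⟪q, x - s h • q⟫ = p - s h * ‖q‖ ^ 2 := by
      rw [inner_sub_right, inner_smul_right, real_inner_self_eq_norm_sq, hp]
    have hfun : s = fun t : ℝ => (p - y) / ‖q‖ ^ 2 * (1 - Real.exp (-(t * η * ‖q‖ ^ 2))) :=
      funext hs
    rw [hinner, hs h, hfun]
    convert key using 1
    field_simp
    ring
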